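/- arXiv:1208.5454 — 7 statements merged into one kernel-verified Lean document; each statement's English description precedes it below -/
import Mathlib

section
/- In the ladder system topology on ω₁, a subset C ⊆ ω₁ has compact closure if and only if C is contained in the union of a finite set and finitely many ladders s_α. Consequently, every compact subset of ω_S is countable. -/
open Topology OnePoint

noncomputable def omega1 : Ordinal := (Cardinal.aleph 1).ord

def IsClubIn (C : Set Ordinal) : Prop :=
  C ⊆ Set.Iio omega1 ∧
  (∀ o, o < omega1 → o ≠ 0 → (∀ p < o, ∃ q ∈ C, p < q ∧ q < o) → o ∈ C) ∧
  (∀ o, o < omega1 → ∃ p ∈ C, o < p)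

/-- The ordinals below `ω₁`. -/
abbrev Om : Type _ := {o : Ordinal // o < omega1}

/-- A ladder system on `ω₁`: for each countable limit ordinal `α`, a strictly increasing
sequence of non-limit ordinals converging to `α`. -/
structure LadderSystem where
  s : Om → ℕ → Om
  strictMono : ∀ α : Om, Order.IsSuccLimit (α : Ordinal) → StrictMono fun n => (s α n : Ordinal)
  notLimit : ∀ α : Om, Order.IsSuccLimit (α : Ordinal) → ∀ n, ¬ Order.IsSuccLimit (s α n : Ordinal)
  lt_self : ∀ α : Om, Order.IsSuccLimit (α : Ordinal) → ∀ n, (s α n : Ordinal) < (α : Ordinal)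
  conv : ∀ α : Om, Order.IsSuccLimit (α : Ordinal) → ∀ β < (α : Ordinal), ∃ n, β < (s α n : Ordinal)

/-- The ladder system topology on `ω₁`: non-limit ordinals are isolated, and a set is a
neighborhood of a limit ordinal `α` iff it contains `α` and cofinitely many points of the
ladder `s_α`. -/
def ladderTop (S : LadderSystem) : TopologicalSpace Om where
  IsOpen U := ∀ α ∈ U, Order.IsSuccLimit (α : Ordinal) → {n | S.s α n ∉ U}.Finite
  isOpen_univ := by intro α _ _; simp
  isOpen_inter := by
    intro U V hU hV α hα hlim
    refine ((hU α hα.1 hlim).union (hV α hα.2 hlim)).subset ?_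
    intro n hn
    simp only [Set.mem_setOf_eq, Set.mem_inter_iff, Set.mem_union] at hn ⊢
    tauto
  isOpen_sUnion := by
    intro T hT α hα hlim
    obtain ⟨t, ht, hαt⟩ := hα
    exact (hT t ht α hαt hlim).subset fun n hn h => hn ⟨t, ht, h⟩

/-- The topology of the one-point compactification `K_S` of the ladder system space. -/
def ksTop (S : LadderSystem) : TopologicalSpace (OnePoint Om) :=
  @OnePoint.instTopologicalSpace Om (ladderTop S)

section Aux

variable (S : LadderSystem)

lemma sInj (α : Om) (hα : Order.IsSuccLimit (α : Ordinal)) : Function.Injective (S.s α) := by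
  intro a b h
  exact (S.strictMono α hα).injective (congrArg Subtype.val h)

lemma isOpen_ladder_singleton (x : Om) (hx : ¬ Order.IsSuccLimit (x : Ordinal)) :
    IsOpen[ladderTop S] {x} := by
  intro α hα hlim
  rw [Set.mem_singleton_iff] at hα
  subst hα
  exact absurd hlim hx

lemma isOpen_V (α : Om) (hα : Order.IsSuccLimit (α : Ordinal)) :
    IsOpen[ladderTop S] (insert α (Set.range (S.s α))) := by
  intro β hβ hβlim
  rcases Set.mem_insert_iff.mp hβ with rfl | hβ
  · have : {n | S.s β n ∉ insert β (Set.range (S.s β))} = ∅ := by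
      ext n; simp
    rw [this]; exact Set.finite_empty
  · obtain ⟨n, rfl⟩ := hβ
    exact absurd hβlim (S.notLimit α hα n)

lemma tendsto_ladder (α : Om) (hα : Order.IsSuccLimit (α : Ordinal)) :
    Filter.Tendsto (S.s α) Filter.atTop (@nhds Om (ladderTop S) α) := by
  letI := ladderTop S
  rw [tendsto_nhds]
  intro U hU hαU
  have h : {n | S.s α n ∉ U}.Finite := hU α hαU hα
  rw [← Nat.cofinite_eq_atTop]
  filter_upwards [h.eventually_cofinite_notMem] with n hn
  exact not_not.mp hn

lemma key_fin (α x : Om) (hα : Order.IsSuccLimit (α : Ordinal)) (hx : Order.IsSuccLimit (x : Ordinal))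
    (hne : x ≠ α) : {n | S.s x n ∈ Set.range (S.s α)}.Finite := by
  have hne' : (x : Ordinal) ≠ (α : Ordinal) := fun h => hne (Subtype.ext h)
  rcases hne'.lt_or_gt with h | h
  · obtain ⟨m, hm⟩ := S.conv α hα x h
    have hsub : {n | S.s x n ∈ Set.range (S.s α)} ⊆ (S.s x) ⁻¹' (S.s α '' Set.Iio m) := by
      intro n hn
      obtain ⟨k, hk⟩ := hn
      refine ⟨k, ?_, hk⟩
      have h1 : (S.s α k : Ordinal) < (x : Ordinal) := by
        rw [hk]; exact S.lt_self x hx n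
      exact (S.strictMono α hα).lt_iff_lt.mp (h1.trans hm)
    exact (((Set.finite_Iio m).image _).preimage (sInj S x hx).injOn).subset hsub
  · obtain ⟨m, hm⟩ := S.conv x hx α h
    refine (Set.finite_Iio m).subset ?_
    intro n hn
    obtain ⟨k, hk⟩ := hn
    have h1 : (S.s x n : Ordinal) < (α : Ordinal) := by
      rw [← hk]; exact S.lt_self α hα k
    exact (S.strictMono x hx).lt_iff_lt.mp (h1.trans hm)

lemma closure_range_subset (α : Om) (hα : Order.IsSuccLimit (α : Ordinal)) :
    closure[ladderTop S] (Set.range (S.s α)) ⊆ insert α (Set.range (S.s α)) := by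
  letI := ladderTop S
  intro x hx
  by_contra hmem
  have hxα : x ≠ α := fun h => hmem (h ▸ Set.mem_insert _ _)
  have hxr : x ∉ Set.range (S.s α) := fun h => hmem (Set.mem_insert_of_mem _ h)
  by_cases hxl : Order.IsSuccLimit (x : Ordinal)
  · set U := insert x (Set.range (S.s x) \ Set.range (S.s α)) with hUdef
    have hUopen : IsOpen U := by
      intro β hβ hβlim
      rcases Set.mem_insert_iff.mp hβ with rfl | hβ
      · refine (key_fin S α β hα hβlim hxα).subset ?_
        intro n hn
        by_contra hc
        exact hn (Set.mem_insert_of_mem _ ⟨⟨n, rfl⟩, hc⟩)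
      · obtain ⟨⟨n, rfl⟩, -⟩ := hβ
        exact absurd hβlim (S.notLimit x hxl n)
    obtain ⟨u, huU, hur⟩ := (mem_closure_iff.mp hx) U hUopen (Set.mem_insert _ _)
    rcases Set.mem_insert_iff.mp huU with rfl | hu
    · exact hxr hur
    · exact hu.2 hur
  · obtain ⟨u, huU, hur⟩ :=
      (mem_closure_iff.mp hx) {x} (isOpen_ladder_singleton S x hxl) rfl
    rw [Set.mem_singleton_iff] at huU
    subst huU
    exact hxr hur

lemma finite_isClosed (F : Set Om) (hF : F.Finite) : IsClosed[ladderTop S] F := by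
  letI := ladderTop S
  rw [← isOpen_compl_iff]
  intro β _ hβlim
  have h : {n | S.s β n ∉ Fᶜ} = (S.s β) ⁻¹' F := by ext n; simp
  rw [h]
  exact hF.preimage (sInj S β hβlim).injOn

lemma compact_subset (K : Set Om) (hK : @IsCompact Om (ladderTop S) K) :
    ∃ (F : Set Om) (G : Finset Om), F.Finite ∧ (∀ α ∈ G, Order.IsSuccLimit (α : Ordinal)) ∧
      K ⊆ F ∪ ⋃ α ∈ G, Set.range (S.s α) := by
  classical
  letI := ladderTop S
  set U : Om → Set Om :=
    fun y => if Order.IsSuccLimit (y : Ordinal) then insert y (Set.range (S.s y)) else {y} with hUdef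
  have hopen : ∀ y : Om, IsOpen (U y) := by
    intro y
    by_cases h : Order.IsSuccLimit (y : Ordinal)
    · simpa [hUdef, h] using isOpen_V S y h
    · simpa [hUdef, h] using isOpen_ladder_singleton S y h
  have hcov : K ⊆ ⋃ y : Om, U y := by
    intro x _
    refine Set.mem_iUnion.mpr ⟨x, ?_⟩
    by_cases h : Order.IsSuccLimit (x : Ordinal) <;> simp [hUdef, h]
  obtain ⟨t, ht⟩ := hK.elim_finite_subcover U hopen hcov
  refine ⟨(t : Set Om), t.filter (fun y => Order.IsSuccLimit (y : Ordinal)), t.finite_toSet, ?_, ?_⟩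
  · intro α hα; exact (Finset.mem_filter.mp hα).2
  · intro x hx
    obtain ⟨y, hyt, hxy⟩ := Set.mem_iUnion₂.mp (ht hx)
    by_cases h : Order.IsSuccLimit (y : Ordinal)
    · rw [hUdef] at hxy
      simp only [if_pos h] at hxy
      rcases Set.mem_insert_iff.mp hxy with rfl | hr
      · exact Set.mem_union_left _ hyt
      · exact Set.mem_union_right _
          (Set.mem_biUnion (Finset.mem_filter.mpr ⟨hyt, h⟩) hr)
    · rw [hUdef] at hxy
      simp only [if_neg h, Set.mem_singleton_iff] at hxy
      subst hxy
      exact Set.mem_union_left _ hyt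

end Aux

/-- A subset of the ladder system space has compact closure iff it is contained in the
union of a finite set and finitely many ladders; consequently every compact subset is
countable. -/
theorem stmt9 (S : LadderSystem) :
    (∀ C : Set Om,
      @IsCompact Om (ladderTop S) (closure[ladderTop S] C) ↔
        ∃ (F : Set Om) (G : Finset Om), F.Finite ∧ (∀ α ∈ G, Order.IsSuccLimit (α : Ordinal)) ∧
          C ⊆ F ∪ ⋃ α ∈ G, Set.range (S.s α)) ∧
    (∀ K : Set Om, @IsCompact Om (ladderTop S) K → K.Countable) := by
  classical
  letI := ladderTop S
  constructor
  · intro C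
    constructor
    · intro h
      obtain ⟨F, G, hF, hG, hsub⟩ := compact_subset S _ h
      exact ⟨F, G, hF, hG, subset_closure.trans hsub⟩
    · rintro ⟨F, G, hF, hG, hsub⟩
      have hBcomp : IsCompact (F ∪ ⋃ α ∈ G, insert α (Set.range (S.s α))) := by
        refine hF.isCompact.union ?_
        refine G.finite_toSet.isCompact_biUnion (fun α hα => ?_)
        exact (tendsto_ladder S α (hG α hα)).isCompact_insert_range
      refine IsCompact.of_isClosed_subset hBcomp isClosed_closure ?_
      have h1 : closure C ⊆ closure (F ∪ ⋃ α ∈ G, Set.range (S.s α)) := closure_mono hsub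
      refine h1.trans ?_
      rw [closure_union, (finite_isClosed S F hF).closure_eq,
        G.closure_biUnion]
      exact Set.union_subset_union_right _
        (Set.iUnion₂_mono fun α hα => closure_range_subset S α (hG α hα))
  · intro K hK
    obtain ⟨F, G, hF, hG, hsub⟩ := compact_subset S K hK
    refine Set.Countable.mono hsub ?_
    exact hF.countable.union
      (Set.Countable.biUnion G.countable_toSet fun α _ => Set.countable_range _)
end

section
/- Let K_S be the one-point compactification of the ladder system space ω_S. If φ : K_S → K_S is continuous and φ(∞) ≠ ∞, then the range of φ is countable. -/
open Topology OnePoint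

lemma countable_Iic_Om (a : Om) : {β : Om | β ≤ a}.Countable := by
  have h1 : Set.Countable (Set.Iic (a : Ordinal)) := by
    rw [← Order.Iio_succ]
    rw [← Cardinal.le_aleph0_iff_set_countable, Ordinal.mk_Iio_ordinal]
    have h2 : (Order.succ (a : Ordinal)).card ≤ Cardinal.aleph 0 := by
      rw [Ordinal.card_succ]
      have : (a : Ordinal).card < Cardinal.aleph 1 := by
        rw [← Cardinal.lt_ord]; exact a.2
      rw [← Cardinal.succ_aleph0, Order.lt_succ_iff] at this
      simpa using Cardinal.add_le_aleph0.2 ⟨this, le_of_lt Cardinal.one_lt_aleph0⟩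
    refine le_trans (Cardinal.lift_le.2 h2) ?_
    simp
  have : {β : Om | β ≤ a} = Subtype.val ⁻¹' Set.Iic (a : Ordinal) := rfl
  rw [this]
  exact h1.preimage Subtype.val_injective

lemma isOpen_Iic_Om (S : LadderSystem) (a : Om) :
    IsOpen[ladderTop S] {β : Om | β ≤ a} := by
  intro α hα hlim
  have : {n | S.s α n ∉ {β : Om | β ≤ a}} = ∅ := by
    ext n
    simp only [Set.mem_setOf_eq, Set.mem_empty_iff_false, iff_false, not_not]
    exact le_of_lt (lt_of_lt_of_le (S.lt_self α hlim n) hα)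
  rw [this]; exact Set.finite_empty

lemma compact_countable (S : LadderSystem) (K : Set Om)
    (hK : @IsCompact _ (ladderTop S) K) : K.Countable := by
  letI := ladderTop S
  obtain ⟨t, htK, htfin, hcov⟩ := hK.elim_finite_subcover_image
    (fun a (_ : a ∈ K) => isOpen_Iic_Om S a)
    (fun x hx => Set.mem_biUnion hx (le_refl x))
  exact (Set.Countable.biUnion htfin.countable
    (fun a _ => countable_Iic_Om a)).mono hcov

/-- A continuous self-map of `K_S` not fixing the point at infinity has countable range. -/
theorem stmt12 (S : LadderSystem) (φ : OnePoint Om → OnePoint Om)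
    (hc : Continuous[ksTop S, ksTop S] φ) (h : φ ∞ ≠ ∞) :
    (Set.range φ).Countable := by
  letI := ladderTop S
  letI : TopologicalSpace (OnePoint Om) := ksTop S
  obtain ⟨a, ha⟩ := OnePoint.ne_infty_iff_exists.1 h
  set U : Set Om := {β | β ≤ a} with hU
  have hVopen : IsOpen ((↑) '' U : Set (OnePoint Om)) :=
    OnePoint.isOpen_image_coe.2 (isOpen_Iic_Om S a)
  have hW : IsOpen (φ ⁻¹' ((↑) '' U)) := hVopen.preimage hc
  have hinfW : ∞ ∈ φ ⁻¹' ((↑) '' U) := by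
    simp only [Set.mem_preimage, ← ha]
    exact ⟨a, le_refl a, rfl⟩
  have hC : IsCompact ((((↑) : Om → OnePoint Om) ⁻¹' (φ ⁻¹' ((↑) '' U)))ᶜ) :=
    (OnePoint.isOpen_def.1 hW).1 hinfW
  set C := (((↑) : Om → OnePoint Om) ⁻¹' (φ ⁻¹' ((↑) '' U)))ᶜ
  have hCc : C.Countable := compact_countable S C hC
  have hsub : Set.range φ ⊆ ((↑) '' U : Set (OnePoint Om)) ∪ φ '' ((↑) '' C) := by
    rintro _ ⟨x, rfl⟩
    cases x with
    | infty => left; rw [← ha]; exact ⟨a, le_refl a, rfl⟩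
    | coe b =>
      by_cases hb : b ∈ C
      · right; exact ⟨↑b, ⟨b, hb, rfl⟩, rfl⟩
      · left; simpa [C] using hb
  exact ((countable_Iic_Om a).image _ |>.union ((hCc.image _).image _)).mono hsub
end

section
/- Let φ : K_S → K_S be a continuous self-map of the one-point compactification of the ladder system space with φ(∞) = ∞. Then there exists a club subset F ⊆ ω₁ such that for every α ∈ F, either φ(α) = α or φ(α) = ∞. -/
open Topology OnePoint

section Aux

open Filter Set

namespace Stmt13Aux

lemma omega1_isLimit : Order.IsSuccLimit omega1 :=
  Cardinal.isSuccLimit_ord Cardinal.aleph0_lt_aleph_one.le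

lemma succ_lt_omega1 {o : Ordinal} (h : o < omega1) : o + 1 < omega1 := by
  rw [Ordinal.add_one_eq_succ]
  exact omega1_isLimit.succ_lt h

lemma bdd_of_countable {T : Set Ordinal} (hc : T.Countable) (hT : ∀ x ∈ T, x < omega1) :
    ∃ δ, δ < omega1 ∧ ∀ x ∈ T, x < δ := by
  rcases T.eq_empty_or_nonempty with rfl | hne
  · exact ⟨1, by simpa using succ_lt_omega1 omega1_isLimit.pos, by simp⟩
  obtain ⟨f, rfl⟩ := hc.exists_eq_range hne
  refine ⟨⨆ n, f n + 1, ?_, ?_⟩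
  · rw [omega1, Cardinal.ord_aleph]
    exact Ordinal.iSup_lt_omega_one fun n =>
      by simpa [omega1] using succ_lt_omega1 (hT _ (Set.mem_range_self n))
  · rintro x ⟨n, rfl⟩
    calc f n < f n + 1 := by rw [Ordinal.add_one_eq_succ]; exact Order.lt_succ _
    _ ≤ _ := Ordinal.le_iSup (fun n => f n + 1) n

lemma countable_Iio {γ : Ordinal} (hγ : γ < omega1) : (Set.Iio γ).Countable := by
  rw [Set.countable_coe_iff.symm]
  have h1 : Countable γ.ToType := by
    rw [← Cardinal.mk_le_aleph0_iff, Cardinal.mk_toType]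
    have : γ.card < Cardinal.aleph 1 := Cardinal.lt_ord.1 hγ
    rwa [← Cardinal.succ_aleph0, Order.lt_succ_iff] at this
  exact Countable.of_equiv _ (Ordinal.ToType.mk (o := γ)).toEquiv.symm

lemma countable_Iic {γ : Ordinal} (hγ : γ < omega1) : (Set.Iic γ).Countable := by
  have := countable_Iio (succ_lt_omega1 hγ)
  refine this.mono ?_
  intro o ho
  have : o < γ + 1 := lt_of_le_of_lt (Set.mem_Iic.1 ho) (by rw [Ordinal.add_one_eq_succ]; exact Order.lt_succ γ)
  exact Set.mem_Iio.2 this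

lemma countable_OmIic (γ : Ordinal) (hγ : γ < omega1) :
    {x : Om | (x : Ordinal) ≤ γ}.Countable := by
  have : {x : Om | (x : Ordinal) ≤ γ} = (fun x : Om => (x : Ordinal)) ⁻¹' (Set.Iic γ) := rfl
  rw [this]
  exact (countable_Iic hγ).preimage Subtype.val_injective

end Stmt13Aux

end Aux
section Aux2

open Filter Set

namespace Stmt13Aux

variable (S : LadderSystem)

lemma ladder_compact_countable {K : Set Om} (hK : @IsCompact Om (ladderTop S) K) :
    K.Countable := by
  letI := ladderTop S
  classical
  set U : Om → Set Om := fun x =>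
    if Order.IsSuccLimit (x : Ordinal) then insert x (Set.range (S.s x)) else {x} with hU
  have hUopen : ∀ x, IsOpen (U x) := by
    intro x
    show ∀ α ∈ U x, Order.IsSuccLimit (α : Ordinal) → {n | S.s α n ∉ U x}.Finite
    intro α hα hlim
    by_cases hx : Order.IsSuccLimit (x : Ordinal)
    · rw [hU] at hα
      simp only [if_pos hx] at hα
      rcases hα with rfl | ⟨m, rfl⟩
      · have : {n | S.s α n ∉ U α} = ∅ := by
          ext n
          simp only [Set.mem_setOf_eq, Set.mem_empty_iff_false, iff_false, not_not, hU,
            if_pos hx]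
          exact Set.mem_insert_of_mem _ ⟨n, rfl⟩
        rw [this]; exact Set.finite_empty
      · exact absurd hlim (S.notLimit x hx m)
    · rw [hU] at hα
      simp only [if_neg hx, Set.mem_singleton_iff] at hα
      subst hα
      exact absurd hlim hx
  have hmem : ∀ x, x ∈ U x := by
    intro x; rw [hU]
    by_cases hx : Order.IsSuccLimit (x : Ordinal)
    · simp [if_pos hx]
    · simp [if_neg hx]
  obtain ⟨t, ht⟩ := hK.elim_finite_subcover U hUopen (fun x hx => Set.mem_iUnion.2 ⟨x, hmem x⟩)
  refine Set.Countable.mono ht ?_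
  refine Set.Countable.biUnion t.countable_toSet fun x _ => ?_
  rw [hU]
  by_cases hx : Order.IsSuccLimit (x : Ordinal)
  · simp only [if_pos hx]
    exact (Set.countable_range _).insert x
  · simp only [if_neg hx]
    exact Set.countable_singleton x

lemma singleton_closed (b : Om) : @IsClosed Om (ladderTop S) {b} := by
  letI := ladderTop S
  rw [← isOpen_compl_iff]
  show ∀ α ∈ ({b} : Set Om)ᶜ, Order.IsSuccLimit (α : Ordinal) → {n | S.s α n ∉ ({b} : Set Om)ᶜ}.Finite
  intro α hα hlim
  have : {n | S.s α n ∉ ({b} : Set Om)ᶜ} = {n | S.s α n = b} := by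
    ext n; simp
  rw [this]
  have hinj : Function.Injective fun n => (S.s α n : Ordinal) := (S.strictMono α hlim).injective
  have hss : {n | S.s α n = b}.Subsingleton := by
    intro m hm n hn
    have hm' : S.s α m = b := hm
    have hn' : S.s α n = b := hn
    exact hinj (show (S.s α m : Ordinal) = (S.s α n : Ordinal) by rw [hm', hn'])
  exact hss.finite

lemma fiber_countable (φ : OnePoint Om → OnePoint Om)
    (hc : Continuous[ksTop S, ksTop S] φ) (hinf : φ ∞ = ∞) (y : Om) :
    {x : Om | φ ↑x = ↑y}.Countable := by
  letI := ladderTop S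
  have hc' : Continuous φ := hc
  have hsing : IsClosed ({((y : Om) : OnePoint Om)} : Set (OnePoint Om)) := by
    rw [← Set.image_singleton, OnePoint.isClosed_image_coe]
    exact ⟨singleton_closed S y, isCompact_singleton⟩
  have hP : IsCompact (φ ⁻¹' {((y : Om) : OnePoint Om)}) :=
    (hsing.preimage hc').isCompact
  have hsub : φ ⁻¹' {((y : Om) : OnePoint Om)} ⊆ Set.range ((↑) : Om → OnePoint Om) := by
    rintro (_ | x) hx
    · exact absurd (hinf.symm.trans hx) (OnePoint.infty_ne_coe _)
    · exact ⟨x, rfl⟩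
  have himg : ((↑) : Om → OnePoint Om) '' (((↑) : Om → OnePoint Om) ⁻¹' (φ ⁻¹' {((y : Om) : OnePoint Om)}))
      = φ ⁻¹' {((y : Om) : OnePoint Om)} := Set.image_preimage_eq_of_subset hsub
  have hQ : IsCompact (((↑) : Om → OnePoint Om) ⁻¹' (φ ⁻¹' {((y : Om) : OnePoint Om)})) := by
    rw [OnePoint.isOpenEmbedding_coe.isEmbedding.isCompact_iff, himg]
    exact hP
  exact ladder_compact_countable S hQ

end Stmt13Aux

end Aux2
section Aux3

open Filter Set

namespace Stmt13Aux

variable (S : LadderSystem)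

lemma exists_bnd (φ : OnePoint Om → OnePoint Om)
    (hc : Continuous[ksTop S, ksTop S] φ) (hinf : φ ∞ = ∞) :
    ∃ f : Ordinal → Ordinal, ∀ γ, γ < omega1 → f γ < omega1 ∧
      ∀ x y : Om, φ ↑x = ↑y →
        (((x : Ordinal) ≤ γ → (y : Ordinal) < f γ) ∧
         ((y : Ordinal) ≤ γ → (x : Ordinal) < f γ)) := by
  classical
  have key : ∀ γ : Ordinal, ∃ δ : Ordinal, γ < omega1 → δ < omega1 ∧
      ∀ x y : Om, φ ↑x = ↑y →
        (((x : Ordinal) ≤ γ → (y : Ordinal) < δ) ∧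
         ((y : Ordinal) ≤ γ → (x : Ordinal) < δ)) := by
    intro γ
    by_cases hγ : γ < omega1
    swap
    · exact ⟨0, fun h => absurd h hγ⟩
    set T1 : Set Ordinal :=
      {o | ∃ x y : Om, (x : Ordinal) ≤ γ ∧ φ ↑x = ↑y ∧ (y : Ordinal) = o} with hT1
    set T2 : Set Ordinal :=
      {o | ∃ x y : Om, φ ↑x = ↑y ∧ (y : Ordinal) ≤ γ ∧ (x : Ordinal) = o} with hT2
    have hT1c : T1.Countable := by
      set g : Om → Ordinal := fun x =>
        if h : ∃ y : Om, φ ↑x = ↑y then ((h.choose : Om) : Ordinal) else 0 with hg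
      have : T1 ⊆ g '' {x : Om | (x : Ordinal) ≤ γ} := by
        rintro o ⟨x, y, hxγ, hxy, rfl⟩
        refine ⟨x, hxγ, ?_⟩
        have h : ∃ y : Om, φ ↑x = ↑y := ⟨y, hxy⟩
        have := h.choose_spec
        have hyy : h.choose = y := OnePoint.coe_injective (this.symm.trans hxy)
        rw [hg]; simp only [dif_pos h, hyy]
      exact ((countable_OmIic γ hγ).image g).mono this
    have hT2c : T2.Countable := by
      have : T2 ⊆ ⋃ y ∈ {y : Om | (y : Ordinal) ≤ γ},
          (fun x : Om => (x : Ordinal)) '' {x : Om | φ ↑x = ↑y} := by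
        rintro o ⟨x, y, hxy, hyγ, rfl⟩
        exact Set.mem_biUnion hyγ ⟨x, hxy, rfl⟩
      refine Set.Countable.mono this ?_
      exact Set.Countable.biUnion (countable_OmIic γ hγ)
        (fun y _ => (fiber_countable S φ hc hinf y).image _)
    have hbd : ∀ o ∈ T1 ∪ T2, o < omega1 := by
      rintro o (⟨x, y, _, _, rfl⟩ | ⟨x, y, _, _, rfl⟩)
      · exact y.2
      · exact x.2
    obtain ⟨δ, hδ1, hδ2⟩ := bdd_of_countable (hT1c.union hT2c) hbd
    refine ⟨δ, fun _ => ⟨hδ1, fun x y hxy => ⟨fun hxγ => ?_, fun hyγ => ?_⟩⟩⟩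
    · exact hδ2 _ (Or.inl ⟨x, y, hxγ, hxy, rfl⟩)
    · exact hδ2 _ (Or.inr ⟨x, y, hxy, hyγ, rfl⟩)
  choose f hf using key
  exact ⟨f, fun γ hγ => ⟨(hf γ hγ).1, (hf γ hγ).2⟩⟩

lemma exists_closure (f : Ordinal → Ordinal) (hf : ∀ γ, γ < omega1 → f γ < omega1) :
    ∃ g : Ordinal → Ordinal, ∀ β, β < omega1 →
      g β < omega1 ∧ β < g β ∧ ∀ γ ≤ β, f γ < g β := by
  have key : ∀ β : Ordinal, ∃ δ : Ordinal, β < omega1 →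
      δ < omega1 ∧ β < δ ∧ ∀ γ ≤ β, f γ < δ := by
    intro β
    by_cases hβ : β < omega1
    swap
    · exact ⟨0, fun h => absurd h hβ⟩
    have hTc : (insert β (f '' Set.Iic β)).Countable :=
      ((countable_Iic hβ).image f).insert β
    have hbd : ∀ o ∈ insert β (f '' Set.Iic β), o < omega1 := by
      rintro o (rfl | ⟨γ, hγ, rfl⟩)
      · exact hβ
      · exact hf γ (lt_of_le_of_lt (Set.mem_Iic.1 hγ) hβ)
    obtain ⟨δ, hδ1, hδ2⟩ := bdd_of_countable hTc hbd
    exact ⟨δ, fun _ => ⟨hδ1, hδ2 _ (Set.mem_insert _ _),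
      fun γ hγ => hδ2 _ (Set.mem_insert_of_mem _ ⟨γ, hγ, rfl⟩)⟩⟩
  choose g hg using key
  exact ⟨g, hg⟩

end Stmt13Aux

end Aux3
lemma Stmt13Aux.isOpen_ladder_iff (S : LadderSystem) {U : Set Om} :
    @IsOpen Om (ladderTop S) U ↔
      ∀ α ∈ U, Order.IsSuccLimit (α : Ordinal) → {n | S.s α n ∉ U}.Finite :=
  Iff.rfl
open Filter Set in
/-- If `φ : K_S → K_S` is continuous and fixes `∞`, then there is a club `F ⊆ ω₁` such that
every `α ∈ F` is either fixed by `φ` or mapped to `∞`. -/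
theorem stmt13 (S : LadderSystem) (φ : OnePoint Om → OnePoint Om)
    (hc : Continuous[ksTop S, ksTop S] φ) (h : φ ∞ = ∞) :
    ∃ F : Set Ordinal, IsClubIn F ∧
      ∀ x : Om, (x : Ordinal) ∈ F → φ ↑x = ↑x ∨ φ ↑x = ∞ := by
  classical
  obtain ⟨f, hf⟩ := Stmt13Aux.exists_bnd S φ hc h
  obtain ⟨g, hg⟩ := Stmt13Aux.exists_closure f (fun γ hγ => (hf γ hγ).1)
  refine ⟨{o | o < omega1 ∧ Order.IsSuccLimit o ∧ ∀ γ < o, f γ < o}, ⟨?_, ?_, ?_⟩, ?_⟩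
  · intro o ho; exact ho.1
  · rintro o ho hne hcl
    refine ⟨ho, Ordinal.isSuccLimit_iff.2 ⟨hne, Order.isSuccPrelimit_of_succ_lt fun γ hγ => ?_⟩, fun γ hγ => ?_⟩
    · obtain ⟨q, hqF, hγq, hqo⟩ := hcl γ hγ
      exact lt_of_le_of_lt (Order.succ_le_of_lt hγq) hqo
    · obtain ⟨q, hqF, hγq, hqo⟩ := hcl γ hγ
      exact lt_trans (hqF.2.2 γ hγq) hqo
  · intro o ho
    set seq : ℕ → Ordinal := fun n => Nat.rec (o + 1) (fun _ ih => g ih) n with hseq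
    have hseq0 : seq 0 = o + 1 := rfl
    have hseqS : ∀ n, seq (n + 1) = g (seq n) := fun n => rfl
    have hlt : ∀ n, seq n < omega1 := by
      intro n; induction n with
      | zero => exact Stmt13Aux.succ_lt_omega1 ho
      | succ n ih => rw [hseqS]; exact (hg _ ih).1
    have hmono : ∀ n, seq n < seq (n + 1) := fun n => (hg _ (hlt n)).2.1
    have hle : ∀ n, seq n ≤ ⨆ m, seq m := fun n => Ordinal.le_iSup seq n
    have hub : ∀ γ, γ < ⨆ m, seq m → ∃ n, γ < seq n := fun γ hγ =>
      Ordinal.lt_iSup_iff.1 hγ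
    have hαlt : (⨆ m, seq m) < omega1 := by
      rw [omega1, Cardinal.ord_aleph]; exact Ordinal.iSup_lt_omega_one (by simpa [omega1] using hlt)
    have hoα : o < ⨆ m, seq m := by
      refine lt_of_lt_of_le ?_ (hle 0)
      rw [hseq0, Ordinal.add_one_eq_succ]; exact Order.lt_succ o
    refine ⟨⨆ m, seq m, ⟨hαlt, Ordinal.isSuccLimit_iff.2 ⟨?_, Order.isSuccPrelimit_of_succ_lt ?_⟩, ?_⟩, hoα⟩
    · intro h0; rw [h0] at hoα; exact (not_lt_zero (a := o)) hoα
    · intro γ hγ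
      obtain ⟨n, hn⟩ := hub γ hγ
      exact lt_of_le_of_lt (Order.succ_le_of_lt hn) (lt_of_lt_of_le (hmono n) (hle (n + 1)))
    · intro γ hγ
      obtain ⟨n, hn⟩ := hub γ hγ
      have h2 : f γ < g (seq n) := (hg _ (hlt n)).2.2 γ hn.le
      exact lt_of_lt_of_le h2 (hle (n + 1))
  · intro x hxF
    obtain ⟨hx1, hxlim, hcl⟩ := hxF
    cases hφ : φ ↑x with
    | infty => exact Or.inr rfl
    | coe y =>
      rcases lt_trichotomy (y : Ordinal) (x : Ordinal) with hlt | heq | hgt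
      · exfalso
        have h4 : (x : Ordinal) < f (y : Ordinal) :=
          ((hf _ y.2).2 x y hφ).2 (le_refl _)
        exact lt_asymm h4 (hcl _ hlt)
      · exact Or.inl (by rw [Subtype.ext heq])
      · exfalso
        letI := ladderTop S
        have hc' : Continuous φ := hc
        have h1 : Tendsto (fun n => S.s x n) atTop (𝓝 x) := by
          rw [tendsto_nhds]
          intro s hs hxs
          have hfin := (Stmt13Aux.isOpen_ladder_iff S).1 hs x hxs hxlim
          rw [← Nat.cofinite_eq_atTop, Filter.mem_cofinite]
          exact hfin
        have h2 : Tendsto (fun n => φ ↑(S.s x n)) atTop (𝓝 (φ ↑x)) :=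
          (hc'.tendsto _).comp ((OnePoint.continuous_coe.tendsto _).comp h1)
        rw [hφ] at h2
        obtain ⟨U, hUopen, hyU, hUgt⟩ : ∃ U : Set Om, IsOpen U ∧ y ∈ U ∧
            ∀ z ∈ U, (x : Ordinal) < (z : Ordinal) := by
          by_cases hylim : Order.IsSuccLimit (y : Ordinal)
          · obtain ⟨N, hN⟩ := S.conv y hylim x hgt
            refine ⟨insert y (S.s y '' Set.Ici N), ?_, Set.mem_insert _ _, ?_⟩
            · refine (Stmt13Aux.isOpen_ladder_iff S).2 ?_
              intro α hα hlim
              rw [Set.mem_insert_iff] at hα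
              rcases hα with rfl | ⟨m, hm, rfl⟩
              · refine Set.Finite.subset (Set.finite_Iio N) ?_
                intro n hn
                by_contra hnN
                exact hn (Set.mem_insert_of_mem _ ⟨n, (show N ≤ n from not_lt.1 (fun hc2 => hnN hc2)), rfl⟩)
              · exact absurd hlim (S.notLimit y hylim m)
            · rintro z (rfl | ⟨m, hm, rfl⟩)
              · exact hgt
              · exact lt_of_lt_of_le hN ((S.strictMono y hylim).monotone hm)
          · refine ⟨{y}, ?_, rfl, ?_⟩
            · refine (Stmt13Aux.isOpen_ladder_iff S).2 ?_
              intro α hα hlim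
              exact absurd ((Set.mem_singleton_iff.1 hα) ▸ hlim) hylim
            · intro z hz; rw [Set.mem_singleton_iff.1 hz]; exact hgt
        have hUopen' : IsOpen (((↑) : Om → OnePoint Om) '' U) :=
          OnePoint.isOpen_image_coe.2 hUopen
        have h3 : ∀ᶠ n in atTop, φ ↑(S.s x n) ∈ ((↑) : Om → OnePoint Om) '' U :=
          h2 (hUopen'.mem_nhds ⟨y, hyU, rfl⟩)
        obtain ⟨n, hn⟩ := h3.exists
        obtain ⟨z, hzU, hz⟩ := hn
        have h4 : (z : Ordinal) < f ((S.s x n : Om) : Ordinal) :=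
          ((hf _ (S.s x n).2).2 (S.s x n) z hz.symm).1 (le_refl _)
        have h5 : f ((S.s x n : Om) : Ordinal) < (x : Ordinal) :=
          hcl _ (S.lt_self x hxlim n)
        exact lt_asymm (hUgt z hzU) (lt_trans h4 h5)
end

section
/- Define φ : K_S → K_S by sending each non-limit ordinal injectively into the set of limit ordinals, and sending every limit ordinal and ∞ to ∞. Then φ is continuous, has uncountable range, and its only fixed point is ∞. -/
open Topology OnePoint

universe u

lemma omega1_isLimit : Order.IsSuccLimit omega1.{u} :=
  Cardinal.isSuccLimit_ord (by simpa using Cardinal.aleph0_le_aleph 1)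

lemma om_uncountable : ¬ Countable Om.{u} := by
  intro hc
  have hc' : Countable ↑(Set.Iio omega1.{u}) := hc
  have h : Cardinal.mk (Set.Iio omega1.{u}) = Cardinal.lift.{u+1,u} (Cardinal.aleph.{u} 1) := by
    rw [Ordinal.mk_Iio_ordinal, omega1, Cardinal.card_ord]
  have h2 := Cardinal.mk_le_aleph0 (α := Set.Iio omega1.{u})
  rw [h, ← Cardinal.lift_aleph0.{u+1,u}, Cardinal.lift_le] at h2
  exact absurd h2 (not_le.mpr Cardinal.aleph0_lt_aleph_one)

noncomputable def OmSucc (x : Om.{u}) : Om.{u} :=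
  ⟨(x : Ordinal) + 1, by
    rw [Ordinal.add_one_eq_succ]; exact omega1_isLimit.succ_lt x.2⟩

lemma OmSucc_notLimit (x : Om.{u}) : ¬ Order.IsSuccLimit ((OmSucc x : Om) : Ordinal) := by
  show ¬ Order.IsSuccLimit ((x : Ordinal) + 1)
  rw [Ordinal.add_one_eq_succ]
  exact Order.not_isSuccLimit_succ _

lemma OmSucc_injective : Function.Injective OmSucc.{u} := by
  intro x y h
  have h' : (x : Ordinal) + 1 = (y : Ordinal) + 1 := congrArg Subtype.val h
  rw [Ordinal.add_one_eq_succ, Ordinal.add_one_eq_succ] at h'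
  exact Subtype.ext (Order.succ_injective h')

/-- A map `φ : K_S → K_S` sending the non-limit ordinals injectively into the limit
ordinals and everything else to `∞` is continuous, has uncountable range, and its only
fixed point is `∞`. -/
theorem stmt14 (S : LadderSystem) (φ : OnePoint Om → OnePoint Om)
    (h1 : ∀ x : Om, ¬ Order.IsSuccLimit (x : Ordinal) → ∃ y : Om, Order.IsSuccLimit (y : Ordinal) ∧ φ ↑x = ↑y)
    (h2 : ∀ x y : Om, ¬ Order.IsSuccLimit (x : Ordinal) → ¬ Order.IsSuccLimit (y : Ordinal) →
      φ ↑x = φ ↑y → x = y)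
    (h3 : ∀ x : Om, Order.IsSuccLimit (x : Ordinal) → φ ↑x = ∞)
    (h4 : φ ∞ = ∞) :
    Continuous[ksTop S, ksTop S] φ ∧ ¬ (Set.range φ).Countable ∧
      ∀ z : OnePoint Om, φ z = z → z = ∞ := by
  classical
  refine ⟨?_, ?_, ?_⟩
  · -- continuity
    letI : TopologicalSpace Om := ladderTop S
    suffices hcont : Continuous φ by exact hcont
    rw [continuous_def]
    intro U hU
    set L : Set Om := {x | Order.IsSuccLimit (x : Ordinal)} with hLdef
    set A : Set Om := {x | ¬ Order.IsSuccLimit (x : Ordinal) ∧ φ ↑x ∉ U} with hAdef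
    have key : ∞ ∈ U → A.Finite := by
      intro hinf
      set C : Set Om := (((↑) : Om → OnePoint Om) ⁻¹' U)ᶜ with hCdef
      have hC : IsCompact C := ((OnePoint.isOpen_iff_of_mem' hinf).mp hU).1
      have hCL : (C ∩ L).Finite := by
        have hW : ∀ ι : Om, IsOpen (Lᶜ ∪ {ι} : Set Om) := by
          intro ι α hα hlim
          have hαι : α = ι := by
            rcases hα with h | h
            · exact absurd hlim h
            · exact h
          refine Set.finite_empty.subset ?_
          intro n hn
          exact absurd (Or.inl (S.notLimit α hlim n)) hn
        obtain ⟨t, ht⟩ := hC.elim_finite_subcover (fun ι : Om => (Lᶜ ∪ {ι} : Set Om)) hW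
          (fun x _ => Set.mem_iUnion.mpr ⟨x, Or.inr rfl⟩)
        refine t.finite_toSet.subset ?_
        rintro α ⟨hαC, hαL⟩
        obtain ⟨V, ⟨ι, rfl⟩, hmem⟩ := ht hαC
        obtain ⟨W, ⟨hι, rfl⟩, hmem⟩ := hmem
        rcases hmem with h | h
        · exact absurd hαL h
        · exact h ▸ hι
      have himg : (fun x : Om => φ ↑x) '' A ⊆ ((↑) : Om → OnePoint Om) '' (C ∩ L) := by
        rintro _ ⟨x, ⟨hxl, hxU⟩, rfl⟩
        obtain ⟨y, hyl, hy⟩ := h1 x hxl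
        refine ⟨y, ⟨?_, hyl⟩, hy.symm⟩
        show (↑y : OnePoint Om) ∉ U
        rw [← hy]; exact hxU
      have hinj : Set.InjOn (fun x : Om => φ ↑x) A :=
        fun x hx y hy h => h2 x y hx.1 hy.1 h
      exact Set.Finite.of_finite_image ((hCL.image _).subset himg) hinj
    rw [OnePoint.isOpen_def]
    constructor
    · intro hmem
      have hinf : ∞ ∈ U := by simpa [h4] using hmem
      have hpre : (((↑) : Om → OnePoint Om) ⁻¹' (φ ⁻¹' U))ᶜ = A := by
        ext x
        simp only [Set.mem_compl_iff, Set.mem_preimage, hAdef, Set.mem_setOf_eq]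
        constructor
        · intro hx
          by_cases hl : Order.IsSuccLimit (x : Ordinal)
          · exact absurd (by rw [h3 x hl]; exact hinf) hx
          · exact ⟨hl, hx⟩
        · exact fun h => h.2
      rw [hpre]
      exact (key hinf).isCompact
    · intro α hα hlim
      have hinf : ∞ ∈ U := by
        have hα' : φ ↑α ∈ U := hα
        rwa [h3 α hlim] at hα'
      have hsinj : Function.Injective (S.s α) := by
        intro n m h
        exact (S.strictMono α hlim).injective (congrArg Subtype.val h)
      have hfin : ((S.s α) ⁻¹' A).Finite :=
        (key hinf).preimage (hsinj.injOn)
      refine hfin.subset ?_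
      intro n hn
      exact ⟨S.notLimit α hlim n, hn⟩
  · -- uncountable range
    intro hcnt
    have hcnt' : Countable ↥(Set.range φ) := hcnt.to_subtype
    have : Countable Om := by
      refine Function.Injective.countable
        (f := fun x : Om => (⟨φ ↑(OmSucc x), Set.mem_range_self _⟩ : Set.range φ)) ?_
      intro x y hxy
      have h' : φ ↑(OmSucc x) = φ ↑(OmSucc y) := congrArg Subtype.val hxy
      exact OmSucc_injective (h2 _ _ (OmSucc_notLimit x) (OmSucc_notLimit y) h')
    exact om_uncountable this
  · -- fixed points
    intro z hz
    cases z with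
    | infty => rfl
    | coe x =>
      by_cases hl : Order.IsSuccLimit (x : Ordinal)
      · rw [h3 x hl] at hz
        exact hz.symm
      · obtain ⟨y, hyl, hy⟩ := h1 x hl
        rw [hy] at hz
        have : y = x := OnePoint.coe_injective hz
        exact absurd (this ▸ hyl) hl
end

section
/- Let A be a nonstationary subset of L(ω₁) and (s_α)_{α ∈ A} the corresponding ladders of a ladder system. Then there exist finite sets t_α ⊆ s_α such that the sets s_α \ t_α, for α ∈ A, are pairwise disjoint. -/
open Topology OnePoint

/-! ### Auxiliary definitions and lemmas -/

/-- The supremum of the part of `C` below `α`. -/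
noncomputable def gf (C : Set Ordinal) (α : Om) : Ordinal :=
  sSup (C ∩ Set.Iio (α : Ordinal))

lemma gf_bdd (C : Set Ordinal) (α : Om) : BddAbove (C ∩ Set.Iio (α : Ordinal)) :=
  ⟨(α : Ordinal), fun _ hx => le_of_lt hx.2⟩

lemma gf_le (C : Set Ordinal) (α : Om) : gf C α ≤ (α : Ordinal) :=
  csSup_le' fun _ hx => le_of_lt hx.2

lemma gf_max (C : Set Ordinal) (α : Om) {q : Ordinal} (hq : q ∈ C)
    (h : q < (α : Ordinal)) : q ≤ gf C α :=
  le_csSup (gf_bdd C α) ⟨hq, h⟩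

lemma gf_memC (C : Set Ordinal)
    (hcl : ∀ o, o < omega1 → o ≠ 0 → (∀ p < o, ∃ q ∈ C, p < q ∧ q < o) → o ∈ C)
    (α : Om) (hg0 : gf C α ≠ 0) : gf C α ∈ C := by
  by_cases hmem : gf C α ∈ C ∩ Set.Iio (α : Ordinal)
  · exact hmem.1
  · have hne : (C ∩ Set.Iio (α : Ordinal)).Nonempty := by
      by_contra h
      rw [Set.not_nonempty_iff_eq_empty] at h
      apply hg0
      unfold gf
      rw [h, csSup_empty]
      rfl
    refine hcl (gf C α) (lt_of_le_of_lt (gf_le C α) α.2) hg0 ?_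
    intro p hp
    obtain ⟨q, hq, hpq⟩ := exists_lt_of_lt_csSup hne hp
    exact ⟨q, hq.1, hpq, lt_of_le_of_ne (le_csSup (gf_bdd C α) hq)
      (fun h => hmem (h ▸ hq))⟩

lemma gf_lt (C : Set Ordinal)
    (hcl : ∀ o, o < omega1 → o ≠ 0 → (∀ p < o, ∃ q ∈ C, p < q ∧ q < o) → o ∈ C)
    (α : Om) (hlim : Order.IsSuccLimit (α : Ordinal)) (hαC : (α : Ordinal) ∉ C) :
    gf C α < (α : Ordinal) := by
  refine lt_of_le_of_ne (gf_le C α) fun h => hαC ?_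
  have hg0 : gf C α ≠ 0 := by rw [h]; exact hlim.pos.ne'
  exact h ▸ gf_memC C hcl α hg0

/-- Almost disjointness of the ladders. -/
lemma ladders_ad (S : LadderSystem) {α β : Om} (hα : Order.IsSuccLimit (α : Ordinal))
    (hβ : Order.IsSuccLimit (β : Ordinal)) (h : (α : Ordinal) < (β : Ordinal)) :
    (Set.range (S.s α) ∩ Set.range (S.s β)).Finite := by
  obtain ⟨n0, hn0⟩ := S.conv β hβ _ h
  apply Set.Finite.subset ((Set.finite_Iio n0).image (S.s β))
  rintro x ⟨hx1, m, rfl⟩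
  refine ⟨m, ?_, rfl⟩
  by_contra hm
  rw [Set.mem_Iio, not_lt] at hm
  have h1 : (α : Ordinal) < (S.s β m : Ordinal) :=
    lt_of_lt_of_le hn0 ((S.strictMono β hβ).monotone hm)
  obtain ⟨k, hk⟩ := hx1
  have h2 : ((S.s β m : Om) : Ordinal) < (α : Ordinal) := hk ▸ S.lt_self α hα k
  exact absurd h1 (not_lt.mpr (le_of_lt h2))

lemma om_ctble {c : Ordinal} (h : c < omega1) :
    Set.Countable {β : Om | (β : Ordinal) < c} := by
  rw [Cardinal.countable_iff_lt_aleph_one]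
  have h1 : Cardinal.mk {β : Om | (β : Ordinal) < c} ≤ Cardinal.mk (Set.Iio c) :=
    Cardinal.mk_le_of_injective (f := fun x => (⟨x.1.1, x.2⟩ : Set.Iio c))
      (by intro a b hab; simp only [Subtype.mk.injEq] at hab
          exact Subtype.ext (Subtype.ext (Subtype.mk.inj hab)))
  rw [Ordinal.mk_Iio_ordinal] at h1
  refine h1.trans_lt ?_
  rw [Cardinal.lift_lt_aleph_one]
  exact Cardinal.lt_ord.mp h

lemma succ_lt_omega1 {γ : Ordinal} (h : γ < omega1) : γ + 1 < omega1 := by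
  have hl := Cardinal.isSuccLimit_ord (le_of_lt Cardinal.aleph0_lt_aleph_one)
  rw [Ordinal.add_one_eq_succ]
  exact hl.succ_lt h

/-- The ladders indexed by a nonstationary set of limit ordinals can be made pairwise
disjoint by removing finitely many elements from each. -/
theorem stmt16 (S : LadderSystem) (A : Set Om) (hA : ∀ α ∈ A, Order.IsSuccLimit (α : Ordinal))
    (hns : ∃ C : Set Ordinal, IsClubIn C ∧ ∀ α ∈ A, (α : Ordinal) ∉ C) :
    ∃ t : Om → Set Om, (∀ α ∈ A, t α ⊆ Set.range (S.s α) ∧ (t α).Finite) ∧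
      ∀ α ∈ A, ∀ β ∈ A, α ≠ β →
        Disjoint (Set.range (S.s α) \ t α) (Set.range (S.s β) \ t β) := by
  classical
  obtain ⟨C, ⟨hCsub, hCcl, hCub⟩, hAC⟩ := hns
  -- enumerate each fiber of `gf C` injectively into ℕ
  have hfib : ∀ γ : Ordinal, ∃ f : Om → ℕ, Set.InjOn f {β | β ∈ A ∧ gf C β = γ} := by
    intro γ
    by_cases hne : {β | β ∈ A ∧ gf C β = γ}.Nonempty
    · obtain ⟨α0, hα0A, hα0g⟩ := hne
      have hγ : γ < omega1 := lt_of_le_of_lt (hα0g ▸ gf_le C α0) α0.2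
      obtain ⟨γ', hγ'C, hγγ'⟩ := hCub γ hγ
      have hsub : {β | β ∈ A ∧ gf C β = γ} ⊆ {β : Om | (β : Ordinal) < γ' + 1} := by
        rintro β ⟨hβA, hβg⟩
        by_contra h
        rw [Set.mem_setOf_eq, not_lt] at h
        have hlt : γ' < (β : Ordinal) := lt_of_lt_of_le (lt_add_one γ') h
        have := gf_max C β hγ'C hlt
        rw [hβg] at this
        exact absurd hγγ' (not_lt.mpr this)
      exact Set.countable_iff_exists_injOn.mp
        ((om_ctble (succ_lt_omega1 (hCsub hγ'C))).mono hsub)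
    · rw [Set.not_nonempty_iff_eq_empty] at hne
      exact ⟨fun _ => 0, by rw [hne]; exact Set.injOn_empty _⟩
  choose e he using hfib
  -- the key interval comparison
  have hle : ∀ α β : Om, gf C α < gf C β → (α : Ordinal) ≤ gf C β := by
    intro α β h
    by_contra hc
    push_neg at hc
    have h0 : gf C β ≠ 0 := (zero_le.trans_lt h).ne'
    exact absurd (gf_max C α (gf_memC C hCcl β h0) hc) (not_le.mpr h)
  refine ⟨fun α => (Set.range (S.s α) ∩ {x : Om | (x : Ordinal) ≤ gf C α}) ∪
      ⋃ β ∈ {β | β ∈ A ∧ gf C β = gf C α ∧ e (gf C α) β < e (gf C α) α},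
        (Set.range (S.s α) ∩ Set.range (S.s β)), ?_, ?_⟩
  · intro α hαA
    have hlim := hA α hαA
    constructor
    · intro x hx
      rcases hx with hx | hx
      · exact hx.1
      · simp only [Set.mem_iUnion] at hx
        obtain ⟨β, _, hx⟩ := hx
        exact hx.1
    · apply Set.Finite.union
      · have hglt : gf C α < α := gf_lt C hCcl α hlim (hAC α hαA)
        obtain ⟨n0, hn0⟩ := S.conv α hlim _ hglt
        apply Set.Finite.subset ((Set.finite_Iio n0).image (S.s α))
        rintro x ⟨⟨k, rfl⟩, hxle⟩
        refine ⟨k, ?_, rfl⟩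
        by_contra hk
        rw [Set.mem_Iio, not_lt] at hk
        have := hn0.trans_le ((S.strictMono α hlim).monotone hk)
        exact absurd hxle (not_le.mpr this)
      · have hidx : {β | β ∈ A ∧ gf C β = gf C α ∧
            e (gf C α) β < e (gf C α) α}.Finite := by
          apply Set.Finite.of_finite_image (f := e (gf C α))
          · refine (Set.finite_Iio (e (gf C α) α)).subset ?_
            rintro n ⟨β, hmem, rfl⟩
            exact hmem.2.2
          · intro a ha b hb hab
            exact he (gf C α) ⟨ha.1, ha.2.1⟩ ⟨hb.1, hb.2.1⟩ hab
        apply hidx.biUnion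
        rintro β ⟨hβA, hβg, hβe⟩
        have hβlim := hA β hβA
        have hne : (β : Ordinal) ≠ (α : Ordinal) := by
          intro h
          rw [Subtype.ext h] at hβe
          exact lt_irrefl _ hβe
        rcases lt_or_gt_of_ne hne with h | h
        · rw [Set.inter_comm]
          exact ladders_ad S hβlim hlim h
        · exact ladders_ad S hlim hβlim h
  · intro α hαA β hβA hne
    rw [Set.disjoint_left]
    rintro x ⟨hxα, hxα'⟩ ⟨hxβ, hxβ'⟩
    rcases lt_trichotomy (gf C α) (gf C β) with h | h | h
    · -- x < α ≤ gf C β, so x is in the first removed part of t β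
      obtain ⟨k, hk⟩ := hxα
      have hx1 : (x : Ordinal) < (α : Ordinal) := hk ▸ S.lt_self α (hA α hαA) k
      exact hxβ' (Or.inl ⟨hxβ, le_of_lt (lt_of_lt_of_le hx1 (hle α β h))⟩)
    · -- same fiber, compare enumerations
      have hmemα : α ∈ {β | β ∈ A ∧ gf C β = gf C α} := ⟨hαA, rfl⟩
      have hmemβ : β ∈ {δ | δ ∈ A ∧ gf C δ = gf C α} := ⟨hβA, h.symm⟩
      have hee : e (gf C α) α ≠ e (gf C α) β :=
        fun hh => hne ((he (gf C α)) hmemα hmemβ hh)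
      rcases lt_or_gt_of_ne hee with hlt | hlt
      · -- e α < e β : x ∈ removed part of t β
        apply hxβ'
        right
        rw [Set.mem_iUnion]
        refine ⟨α, ?_⟩
        rw [Set.mem_iUnion]
        rw [h] at hlt
        exact ⟨⟨hαA, h, hlt⟩, hxβ, hxα⟩
      · apply hxα'
        right
        rw [Set.mem_iUnion]
        refine ⟨β, ?_⟩
        rw [Set.mem_iUnion]
        exact ⟨⟨hβA, h.symm, hlt⟩, hxα, hxβ⟩
    · obtain ⟨k, hk⟩ := hxβ
      have hx1 : (x : Ordinal) < (β : Ordinal) := hk ▸ S.lt_self β (hA β hβA) k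
      exact hxα' (Or.inl ⟨hxα, le_of_lt (lt_of_lt_of_le hx1 (hle β α h))⟩)
end

section
/- Let K be a compact Hausdorff space and φ : K → K continuous. Suppose there is an uncountable set A ⊆ K with φ restricted to A injective and φ(A) ∩ A = ∅. Then for every bounded Borel function g : K → ℝ, the map on the dual space C(K)* given by μ ↦ (C_φ)*μ + (∫ g dμ restricted appropriately), namely μ ↦ (f ↦ μ(f ∘ φ)) + (f ↦ ∫ f g dμ), sends the set of Dirac measures {δ_x : x ∈ A} to an uncountable set that is discrete in the norm topology of C(K)*; in particular this operator does not have separable range. -/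
/-- If `φ : K → K` is continuous on a compact Hausdorff space, `A ⊆ K` is uncountable,
`φ` is injective on `A` and `φ(A) ∩ A = ∅`, then for any bounded Borel `g` the operator
`(C_φ)* + M_g*` maps the Dirac functionals `{δ_x : x ∈ A}` (on which it acts by
`δ_x ↦ (f ↦ f (φ x) + g x * f x)`) to an uncountable, norm-discrete (1-separated) set;
in particular this set is not separable, so the operator does not have separable range. -/
theorem stmt17 {K : Type*} [TopologicalSpace K] [CompactSpace K] [T2Space K]
    (φ : K → K) (hφ : Continuous φ) (A : Set K) (hA : ¬ A.Countable)
    (hinj : Set.InjOn φ A) (hdisj : Disjoint (φ '' A) A)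
    (g : K → ℝ) (hg : @Measurable K ℝ (borel K) (borel ℝ) g) (hgb : ∃ M, ∀ x, |g x| ≤ M) :
    letI Λ : K → (C(K, ℝ) →L[ℝ] ℝ) := fun x =>
      ContinuousMap.evalCLM ℝ (φ x) + g x • ContinuousMap.evalCLM ℝ x
    ¬ (Λ '' A).Countable ∧
    (∀ x ∈ A, ∀ y ∈ A, x ≠ y → 1 ≤ ‖Λ x - Λ y‖) ∧
    ¬ TopologicalSpace.IsSeparable (Λ '' A) := by
  set Λ : K → (C(K, ℝ) →L[ℝ] ℝ) := fun x =>
    ContinuousMap.evalCLM ℝ (φ x) + g x • ContinuousMap.evalCLM ℝ x with hΛ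
  have key : ∀ x ∈ A, ∀ y ∈ A, x ≠ y → 1 ≤ ‖Λ x - Λ y‖ := by
    intro x hx y hy hxy
    have hφxA : φ x ∉ A := fun h => Set.disjoint_left.mp hdisj (Set.mem_image_of_mem φ hx) h
    have hφyA : φ y ∉ A := fun h => Set.disjoint_left.mp hdisj (Set.mem_image_of_mem φ hy) h
    have hφxy : φ x ≠ φ y := fun h => hxy (hinj hx hy h)
    have hne : φ x ∉ ({x, y, φ y} : Set K) := by
      simp only [Set.mem_insert_iff, Set.mem_singleton_iff]
      push_neg
      exact ⟨fun h => hφxA (h.symm ▸ hx), fun h => hφxA (h.symm ▸ hy), hφxy⟩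
    have hsfin : ({x, y, φ y} : Set K).Finite := Set.toFinite _
    obtain ⟨f, hf0, hf1, hf01⟩ := exists_continuous_zero_one_of_isClosed
      hsfin.isClosed isClosed_singleton (by simpa [Set.disjoint_singleton_right] using hne)
    have hfx : f x = 0 := hf0 (by simp)
    have hfy : f y = 0 := hf0 (by simp)
    have hfφy : f (φ y) = 0 := hf0 (by simp)
    have hfφx : f (φ x) = 1 := hf1 rfl
    have hfnorm : ‖f‖ ≤ 1 := by
      rw [ContinuousMap.norm_le f zero_le_one]
      intro z
      rw [Real.norm_eq_abs, abs_le]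
      exact ⟨by linarith [(hf01 z).1], (hf01 z).2⟩
    have happ : (Λ x - Λ y) f = 1 := by
      simp only [Λ, ContinuousLinearMap.sub_apply, ContinuousLinearMap.add_apply,
        ContinuousLinearMap.smul_apply, smul_eq_mul]
      show f (φ x) + g x * f x - (f (φ y) + g y * f y) = 1
      rw [hfx, hfy, hfφx, hfφy]
      ring
    have := (Λ x - Λ y).le_opNorm f
    rw [happ] at this
    simp only [norm_one] at this
    calc (1:ℝ) ≤ ‖Λ x - Λ y‖ * ‖f‖ := this
      _ ≤ ‖Λ x - Λ y‖ * 1 := by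
          exact mul_le_mul_of_nonneg_left hfnorm (ContinuousLinearMap.opNorm_nonneg _)
      _ = ‖Λ x - Λ y‖ := mul_one _
  have hΛinj : Set.InjOn Λ A := by
    intro x hx y hy h
    by_contra hxy
    have h1 := key x hx y hy hxy
    have h0 : ‖Λ x - Λ y‖ = 0 := by rw [h, sub_self]; exact norm_zero (E := C(K, ℝ) →L[ℝ] ℝ)
    linarith
  have huncount : ¬ (Λ '' A).Countable := by
    intro h
    exact hA ((Set.mapsTo_image Λ A).countable_of_injOn hΛinj h)
  refine ⟨huncount, key, ?_⟩
  intro hsep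
  obtain ⟨c, hc, hsub⟩ := hsep
  have hch : ∀ a : Λ '' A, ∃ s ∈ c, dist (a : C(K, ℝ) →L[ℝ] ℝ) s < 1/2 := fun a =>
    Metric.mem_closure_iff.mp (hsub a.2) (1/2) (by norm_num)
  choose F hFc hFd using hch
  have hFinj : Function.Injective (fun a => (⟨F a, hFc a⟩ : c)) := by
    intro a b hab
    simp only [Subtype.mk.injEq] at hab
    by_contra hne
    obtain ⟨x, hx, hxa⟩ := a.2
    obtain ⟨y, hy, hyb⟩ := b.2
    have h1 : (a : C(K, ℝ) →L[ℝ] ℝ) ≠ (b : C(K, ℝ) →L[ℝ] ℝ) := fun h => hne (Subtype.ext h)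
    have hxy : x ≠ y := fun h => h1 (by rw [← hxa, ← hyb, h])
    have hk := key x hx y hy hxy
    have hd1 : dist (a : C(K, ℝ) →L[ℝ] ℝ) (b : C(K, ℝ) →L[ℝ] ℝ) ≤
        dist (a : C(K, ℝ) →L[ℝ] ℝ) (F a) + dist (F b) (b : C(K, ℝ) →L[ℝ] ℝ) := by
      rw [← hab]
      exact dist_triangle _ _ _
    have hd2 : dist (a : C(K, ℝ) →L[ℝ] ℝ) (b : C(K, ℝ) →L[ℝ] ℝ) < 1 := by
      have := hFd a
      have h2 := hFd b
      rw [dist_comm (F b)] at hd1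
      linarith
    have hk2 : (1:ℝ) ≤ dist (a : C(K, ℝ) →L[ℝ] ℝ) (b : C(K, ℝ) →L[ℝ] ℝ) := by
      have hdd : dist (a : C(K, ℝ) →L[ℝ] ℝ) (b : C(K, ℝ) →L[ℝ] ℝ)
          = ‖(a : C(K, ℝ) →L[ℝ] ℝ) - (b : C(K, ℝ) →L[ℝ] ℝ)‖ := dist_eq_norm (E := C(K, ℝ) →L[ℝ] ℝ) _ _
      rw [hdd, ← hxa, ← hyb]; exact hk
    linarith
  have := hc.to_subtype
  exact huncount (Set.countable_coe_iff.mpr hFinj.countable)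
end

section
/- Let φ : K_S → K_S be the continuous map sending S(ω₁) injectively into L(ω₁) and everything else to ∞, and let g : K_S → ℝ be a bounded Borel function such that C_φ + M_g : C(K_S) → B(K_S) has separable range (where B(K_S) is the bounded Borel functions with sup norm). Then {x ∈ K_S : g(x) ≠ 0} is countable. -/
open Topology OnePoint

namespace Stmt18Aux

lemma ladder_isOpen_iff (S : LadderSystem) {U : Set Om} :
    IsOpen[ladderTop S] U ↔ ∀ α ∈ U, Order.IsSuccLimit (α : Ordinal) → {n | S.s α n ∉ U}.Finite :=
  Iff.rfl

lemma s_inj (S : LadderSystem) (α : Om) (hα : Order.IsSuccLimit (α : Ordinal)) :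
    Function.Injective (S.s α) := fun m n h =>
  (S.strictMono α hα).injective (a₁ := m) (a₂ := n) (by rw [h])

lemma tail_finite (S : LadderSystem) (α : Om) (hα : Order.IsSuccLimit (α : Ordinal))
    {γ : Ordinal} (hγ : γ < α) : {n : ℕ | (S.s α n : Ordinal) ≤ γ}.Finite := by
  obtain ⟨n₀, hn₀⟩ := S.conv α hα γ hγ
  refine (Set.finite_Iio n₀).subset fun n hn => ?_
  simp only [Set.mem_setOf_eq] at hn
  by_contra h
  have h' : n₀ ≤ n := not_lt.mp h
  exact absurd (le_trans ((S.strictMono α hα).monotone h') hn) (not_le.mpr hn₀)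

lemma ad (S : LadderSystem) (α β : Om) (hα : Order.IsSuccLimit (α : Ordinal))
    (hβ : Order.IsSuccLimit (β : Ordinal)) (hne : β ≠ α) :
    {n : ℕ | S.s β n ∈ insert α (Set.range (S.s α))}.Finite := by
  have hstep : {n : ℕ | S.s β n ∈ Set.range (S.s α)}.Finite := by
    rcases lt_or_gt_of_ne (show (β : Ordinal) ≠ (α : Ordinal) from
        fun h => hne (Subtype.ext h)) with hlt | hgt
    · have hF : {m : ℕ | (S.s α m : Ordinal) ≤ (β : Ordinal)}.Finite :=
        tail_finite S α hα hlt
      have hsub : {n : ℕ | S.s β n ∈ Set.range (S.s α)} ⊆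
          (S.s β) ⁻¹' (S.s α '' {m | (S.s α m : Ordinal) ≤ (β : Ordinal)}) := by
        rintro n ⟨m, hm⟩
        refine ⟨m, ?_, hm⟩
        show (S.s α m : Ordinal) ≤ (β : Ordinal)
        rw [hm]
        exact le_of_lt (S.lt_self β hβ n)
      exact (Set.Finite.preimage ((s_inj S β hβ).injOn) (hF.image _)).subset hsub
    · refine (tail_finite S β hβ hgt).subset ?_
      rintro n ⟨m, hm⟩
      show (S.s β n : Ordinal) ≤ (α : Ordinal)
      rw [← hm]
      exact le_of_lt (S.lt_self α hα m)
  refine hstep.subset fun n hn => ?_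
  rcases hn with h | h
  · exact absurd (by rw [h]; exact hα) (S.notLimit β hβ n)
  · exact h

lemma clopen_singleton (S : LadderSystem) (α : Om) (hα : ¬ Order.IsSuccLimit (α : Ordinal)) :
    @IsClopen (OnePoint Om) (ksTop S) {(↑α : OnePoint Om)} := by
  letI : TopologicalSpace Om := ladderTop S
  show IsClopen {(↑α : OnePoint Om)}
  have hpre : (((↑) : Om → OnePoint Om) ⁻¹' {(↑α : OnePoint Om)}) = {α} := by
    ext x; simp [OnePoint.coe_eq_coe]
  constructor
  · -- IsClosed
    rw [← isOpen_compl_iff, OnePoint.isOpen_def]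
    constructor
    · intro _
      have : (((↑) : Om → OnePoint Om) ⁻¹' ({(↑α : OnePoint Om)}ᶜ)) = ({α}ᶜ : Set Om) := by
        rw [Set.preimage_compl, hpre]
      rw [this, compl_compl]
      exact isCompact_singleton
    · have : (((↑) : Om → OnePoint Om) ⁻¹' ({(↑α : OnePoint Om)}ᶜ)) = ({α}ᶜ : Set Om) := by
        rw [Set.preimage_compl, hpre]
      rw [this]
      refine (ladder_isOpen_iff S).mpr fun β _ hlim => ?_
      refine Set.Subsingleton.finite fun a ha b hb => s_inj S β hlim ?_
      simp only [Set.mem_setOf_eq, Set.mem_compl_iff, Set.mem_singleton_iff, not_not] at ha hb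
      rw [ha, hb]
  · -- IsOpen
    rw [OnePoint.isOpen_def]
    refine ⟨fun h => absurd h (by simp), ?_⟩
    rw [hpre]
    refine (ladder_isOpen_iff S).mpr fun β hβ hlim => ?_
    rw [Set.mem_singleton_iff] at hβ
    exact absurd (hβ ▸ hlim) hα

lemma ladder_compact (S : LadderSystem) (α : Om) (hα : Order.IsSuccLimit (α : Ordinal)) :
    @IsCompact Om (ladderTop S) (insert α (Set.range (S.s α))) := by
  letI : TopologicalSpace Om := ladderTop S
  have htend : Filter.Tendsto (S.s α) Filter.cofinite (𝓝 α) := by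
    rw [tendsto_nhds]
    intro O hO hmem
    have hfin := (ladder_isOpen_iff S).mp hO α hmem hα
    rw [← Filter.eventually_mem_set, Filter.eventually_cofinite]
    exact hfin
  exact htend.isCompact_insert_range_of_cofinite

lemma clopen_ladder (S : LadderSystem) (α : Om) (hα : Order.IsSuccLimit (α : Ordinal)) :
    @IsClopen (OnePoint Om) (ksTop S)
      (((↑) : Om → OnePoint Om) '' (insert α (Set.range (S.s α)))) := by
  letI : TopologicalSpace Om := ladderTop S
  set U : Set Om := insert α (Set.range (S.s α)) with hU
  show IsClopen (((↑) : Om → OnePoint Om) '' U)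
  have hUopen : IsOpen U := by
    refine (ladder_isOpen_iff S).mpr fun β hβ hlim => ?_
    rcases hβ with hβ | ⟨n, hn⟩
    · subst hβ
      have : {n : ℕ | S.s β n ∉ U} = ∅ := by
        ext n; simp only [Set.mem_setOf_eq, Set.mem_empty_iff_false, iff_false, not_not]
        exact Set.mem_insert_of_mem _ ⟨n, rfl⟩
      rw [this]; exact Set.finite_empty
    · exact absurd (hn ▸ hlim) (by rw [← hn] at hlim; exact absurd hlim (S.notLimit α hα n))
  have hUc : IsOpen Uᶜ := by
    refine (ladder_isOpen_iff S).mpr fun β hβ hlim => ?_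
    have hne : β ≠ α := fun h => hβ (h ▸ Set.mem_insert α _)
    have := ad S α β hα hlim hne
    refine this.subset fun n hn => ?_
    exact not_not.mp hn
  constructor
  · rw [OnePoint.isClosed_image_coe]
    exact ⟨isOpen_compl_iff.mp hUc, ladder_compact S α hα⟩
  · exact OnePoint.isOpen_image_coe.mpr hUopen

lemma cont_indicator {X : Type*} [TopologicalSpace X] {W : Set X} (h : IsClopen W) :
    Continuous (W.indicator (1 : X → ℝ)) := by
  classical
  apply IsLocallyConstant.continuous (f := W.indicator (1 : X → ℝ))
  intro t
  have hpre : W.indicator (1 : X → ℝ) ⁻¹' t =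
      (if (1 : ℝ) ∈ t then W else ∅) ∪ (if (0 : ℝ) ∈ t then Wᶜ else ∅) := by
    ext x
    by_cases hx : x ∈ W <;>
      by_cases h1 : (1 : ℝ) ∈ t <;> by_cases h0 : (0 : ℝ) ∈ t <;>
        simp [Set.indicator_of_mem, Set.indicator_of_notMem, hx, h1, h0]
  rw [hpre]
  apply IsOpen.union
  · split <;> [exact h.2; exact isOpen_empty]
  · split <;> [exact h.1.isOpen_compl; exact isOpen_empty]

lemma indicator_bdd {X : Type*} (W : Set X) (x : X) : |W.indicator (1 : X → ℝ) x| ≤ 1 := by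
  classical
  by_cases hx : x ∈ W <;>
    simp [Set.indicator_of_mem, Set.indicator_of_notMem, hx]

lemma abstract_count {ι X : Type*} (T : ι → X → ℝ) (pt : ι → X) (s : Set ι)
    (D : Set (X → ℝ)) (hD : D.Countable) (ε : ℝ) (hε : 0 < ε)
    (happrox : ∀ α ∈ s, ∃ d ∈ D, ∀ x, |T α x - d x| ≤ ε / 3)
    (hdiag : ∀ α ∈ s, ε ≤ |T α (pt α)|)
    (hcross : ∀ α ∈ s, ∀ β ∈ s, β ≠ α → T β (pt α) = 0) : s.Countable := by
  classical
  have hch : ∀ α : ι, ∃ d : X → ℝ, α ∈ s → d ∈ D ∧ ∀ x, |T α x - d x| ≤ ε / 3 := by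
    intro α
    by_cases h : α ∈ s
    · obtain ⟨d, hd, hdx⟩ := happrox α h
      exact ⟨d, fun _ => ⟨hd, hdx⟩⟩
    · exact ⟨fun _ => 0, fun h' => absurd h' h⟩
  choose F hF using hch
  have hinj : Set.InjOn F s := by
    intro a ha b hb hab
    by_contra hne
    have h1 := (hF a ha).2 (pt a)
    have h2 := (hF b hb).2 (pt a)
    have h3 : T b (pt a) = 0 := hcross a ha b hb (fun h => hne h.symm)
    rw [h3, zero_sub, abs_neg] at h2
    rw [hab] at h1
    have h4 := hdiag a ha
    have h5 : |T a (pt a)| - |F b (pt a)| ≤ |T a (pt a) - F b (pt a)| :=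
      abs_sub_abs_le_abs_sub _ _
    linarith
  exact Set.countable_of_injective_of_countable_image hinj
    (hD.mono (by rintro _ ⟨a, ha, rfl⟩; exact (hF a ha).1))

end Stmt18Aux

open Stmt18Aux in
/-- Let `φ : K_S → K_S` send the non-limit ordinals injectively into the limit ordinals
and everything else to `∞`, and let `g` be a bounded Borel function on `K_S`. If the
operator `C_φ + M_g : C(K_S) → B(K_S)`, `f ↦ f ∘ φ + f·g`, has separable range (for the
sup norm), then `g` vanishes outside a countable set. -/
theorem stmt18 (S : LadderSystem) (φ : OnePoint Om → OnePoint Om)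
    (h1 : ∀ x : Om, ¬ Order.IsSuccLimit (x : Ordinal) → ∃ y : Om, Order.IsSuccLimit (y : Ordinal) ∧ φ ↑x = ↑y)
    (h2 : ∀ x y : Om, ¬ Order.IsSuccLimit (x : Ordinal) → ¬ Order.IsSuccLimit (y : Ordinal) →
      φ ↑x = φ ↑y → x = y)
    (h3 : ∀ x : Om, Order.IsSuccLimit (x : Ordinal) → φ ↑x = ∞)
    (h4 : φ ∞ = ∞)
    (g : OnePoint Om → ℝ)
    (hg : @Measurable (OnePoint Om) ℝ (@borel _ (ksTop S)) (borel ℝ) g)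
    (hgb : ∃ M, ∀ x, |g x| ≤ M)
    (hsep : ∃ D : Set (OnePoint Om → ℝ), D.Countable ∧
      ∀ f : OnePoint Om → ℝ, Continuous[ksTop S, inferInstance] f → (∃ M, ∀ x, |f x| ≤ M) →
        ∀ ε : ℝ, 0 < ε → ∃ d ∈ D, ∀ x, |(f (φ x) + f x * g x) - d x| ≤ ε) :
    {x : OnePoint Om | g x ≠ 0}.Countable := by
  classical
  obtain ⟨D, hD, hDsep⟩ := hsep
  -- indicator of a singleton successor
  set fS : Om → OnePoint Om → ℝ :=
    fun α => Set.indicator {(↑α : OnePoint Om)} (1 : OnePoint Om → ℝ) with hfS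
  -- indicator of a ladder together with its limit
  set fL : Om → OnePoint Om → ℝ :=
    fun α => Set.indicator (((↑) : Om → OnePoint Om) '' (insert α (Set.range (S.s α))))
      (1 : OnePoint Om → ℝ) with hfL
  have succ_count : ∀ ε : ℝ, 0 < ε →
      {α : Om | ε ≤ |g ↑α| ∧ ¬ Order.IsSuccLimit (α : Ordinal)}.Countable := by
    intro ε hε
    refine abstract_count (fun (α : Om) (x : OnePoint Om) => fS α (φ x) + fS α x * g x)
      (fun α => (↑α : OnePoint Om)) _ D hD ε hε ?_ ?_ ?_
    · intro α hα
      exact hDsep (fS α) (@cont_indicator (OnePoint Om) (ksTop S) _ (clopen_singleton S α hα.2))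
        ⟨1, indicator_bdd _⟩ (ε / 3) (by positivity)
    · intro α hα
      have e1 : fS α (φ ↑α) = 0 := by
        show Set.indicator {(↑α : OnePoint Om)} (1 : OnePoint Om → ℝ) (φ ↑α) = 0
        obtain ⟨y, hy, hφ⟩ := h1 α hα.2
        rw [hφ]
        refine Set.indicator_of_notMem ?_ _
        simp only [Set.mem_singleton_iff, OnePoint.coe_eq_coe]
        exact fun h => hα.2 (h ▸ hy)
      have e2 : fS α (↑α : OnePoint Om) = 1 := by
        show Set.indicator {(↑α : OnePoint Om)} (1 : OnePoint Om → ℝ) ↑α = 1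
        rw [Set.indicator_of_mem (Set.mem_singleton _)]; rfl
      show ε ≤ |fS α (φ ↑α) + fS α ↑α * g ↑α|
      rw [e1, e2, zero_add, one_mul]
      exact hα.1
    · intro α hα β hβ hne
      have e1 : fS β (φ ↑α) = 0 := by
        show Set.indicator {(↑β : OnePoint Om)} (1 : OnePoint Om → ℝ) (φ ↑α) = 0
        obtain ⟨y, hy, hφ⟩ := h1 α hα.2
        rw [hφ]
        refine Set.indicator_of_notMem ?_ _
        simp only [Set.mem_singleton_iff, OnePoint.coe_eq_coe]
        exact fun h => hβ.2 (h ▸ hy)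
      have e2 : fS β (↑α : OnePoint Om) = 0 := by
        show Set.indicator {(↑β : OnePoint Om)} (1 : OnePoint Om → ℝ) ↑α = 0
        refine Set.indicator_of_notMem ?_ _
        simp only [Set.mem_singleton_iff, OnePoint.coe_eq_coe]
        exact fun h => hne (h.symm)
      show fS β (φ ↑α) + fS β ↑α * g ↑α = 0
      rw [e1, e2, zero_mul, add_zero]
  have lim_count : ∀ ε : ℝ, 0 < ε →
      {α : Om | ε ≤ |g ↑α| ∧ Order.IsSuccLimit (α : Ordinal)}.Countable := by
    intro ε hε
    refine abstract_count (fun (α : Om) (x : OnePoint Om) => fL α (φ x) + fL α x * g x)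
      (fun α => (↑α : OnePoint Om)) _ D hD ε hε ?_ ?_ ?_
    · intro α hα
      exact hDsep (fL α) (@cont_indicator (OnePoint Om) (ksTop S) _ (clopen_ladder S α hα.2))
        ⟨1, indicator_bdd _⟩ (ε / 3) (by positivity)
    · intro α hα
      have e1 : fL α (φ ↑α) = 0 := by
        show Set.indicator (((↑) : Om → OnePoint Om) '' (insert α (Set.range (S.s α))))
          (1 : OnePoint Om → ℝ) (φ ↑α) = 0
        rw [h3 α hα.2]
        exact Set.indicator_of_notMem OnePoint.infty_notMem_image_coe _
      have e2 : fL α (↑α : OnePoint Om) = 1 := by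
        show Set.indicator (((↑) : Om → OnePoint Om) '' (insert α (Set.range (S.s α))))
          (1 : OnePoint Om → ℝ) ↑α = 1
        have hmem : (↑α : OnePoint Om) ∈ ((↑) : Om → OnePoint Om) '' (insert α (Set.range (S.s α))) :=
          ⟨α, Set.mem_insert _ _, rfl⟩
        rw [Set.indicator_of_mem hmem]; rfl
      show ε ≤ |fL α (φ ↑α) + fL α ↑α * g ↑α|
      rw [e1, e2, zero_add, one_mul]
      exact hα.1
    · intro α hα β hβ hne
      have e1 : fL β (φ ↑α) = 0 := by
        show Set.indicator (((↑) : Om → OnePoint Om) '' (insert β (Set.range (S.s β))))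
          (1 : OnePoint Om → ℝ) (φ ↑α) = 0
        rw [h3 α hα.2]
        exact Set.indicator_of_notMem OnePoint.infty_notMem_image_coe _
      have e2 : fL β (↑α : OnePoint Om) = 0 := by
        show Set.indicator (((↑) : Om → OnePoint Om) '' (insert β (Set.range (S.s β))))
          (1 : OnePoint Om → ℝ) ↑α = 0
        refine Set.indicator_of_notMem ?_ _
        rintro ⟨γ, hγ, hcoe⟩
        rw [OnePoint.coe_eq_coe] at hcoe
        subst hcoe
        rcases hγ with h | ⟨n, hn⟩
        · exact hne h.symm
        · exact S.notLimit β hβ.2 n (by rw [hn]; exact hα.2)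
      show fL β (φ ↑α) + fL β ↑α * g ↑α = 0
      rw [e1, e2, zero_mul, add_zero]
  have hsubset : {x : OnePoint Om | g x ≠ 0} ⊆ insert ∞
      (⋃ k : ℕ, ((fun a : Om => (↑a : OnePoint Om)) ''
          {α : Om | 1 / ((k : ℝ) + 1) ≤ |g ↑α| ∧ ¬ Order.IsSuccLimit (α : Ordinal)} ∪
        (fun a : Om => (↑a : OnePoint Om)) ''
          {α : Om | 1 / ((k : ℝ) + 1) ≤ |g ↑α| ∧ Order.IsSuccLimit (α : Ordinal)})) := by
    intro x hx
    cases x with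
    | infty => exact Set.mem_insert _ _
    | coe a =>
      have hpos : 0 < |g (↑a : OnePoint Om)| := abs_pos.mpr hx
      obtain ⟨k, hk⟩ := exists_nat_one_div_lt hpos
      refine Set.mem_insert_of_mem _ (Set.mem_iUnion.mpr ⟨k, ?_⟩)
      by_cases hl : Order.IsSuccLimit (a : Ordinal)
      · exact Or.inr ⟨a, ⟨le_of_lt hk, hl⟩, rfl⟩
      · exact Or.inl ⟨a, ⟨le_of_lt hk, hl⟩, rfl⟩
  refine Set.Countable.mono hsubset ?_
  refine Set.Countable.insert _ (Set.countable_iUnion fun k => Set.Countable.union ?_ ?_)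
  · exact (succ_count (1 / ((k : ℝ) + 1)) (by positivity)).image _
  · exact (lim_count (1 / ((k : ℝ) + 1)) (by positivity)).image _
end
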